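/- If a language L ⊆ Σ^ω is recognized by an ω-congruence of finite index, i.e., an equivalence relation ~ on Σ* satisfying conditions (1) and (2) of the ω-congruence definition, then L is ω-regular (recognizable by a Büchi automaton). -/

import Mathlib

open Filter

variable {A : Type*}

/-- The interval coded by `p` occupies positions `p.1, …, p.1 + p.2 - 1` (length `p.2 > 0`). -/
def IntervalLt (p q : ℕ × ℕ) : Prop := p.1 + p.2 ≤ q.1

def IntervalDisj (p q : ℕ × ℕ) : Prop := p.1 + p.2 ≤ q.1 ∨ q.1 + q.2 ≤ p.1

def prefixList (u : ℕ → List A) (m : ℕ) : List A := (List.range m).flatMap u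

/-- Prepending a finite word to an ω-word. -/
def prepend (w : List A) (x : ℕ → A) : ℕ → A := fun n =>
  if h : n < w.length then w.get ⟨n, h⟩ else x (n - w.length)

open Classical in
/-- The infinite concatenation `u 0 · u 1 · u 2 ⋯` of a sequence of finite words, as an
ω-word; meaningful when infinitely many of the `u i` are nonempty. -/
noncomputable def omegaConcat [Inhabited A] (u : ℕ → List A) : ℕ → A := fun n =>
  if h : ∃ m, n < (prefixList u m).length
  then (prefixList u (Nat.find h)).getD n default
  else default

/-- The ω-power `v^ω` of a finite word; meaningful when `v ≠ []`. -/
noncomputable def omegaPow [Inhabited A] (v : List A) : ℕ → A := fun n =>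
  v.getD (n % v.length) default

/-- Infinitely many of the words `u i` are nonempty. -/
def InfOftenNonempty (u : ℕ → List A) : Prop := ∀ n, ∃ m, n ≤ m ∧ u m ≠ []

/-- A relation on finite words has finite index (finitely many classes). -/
def FiniteIndex (r : List A → List A → Prop) : Prop :=
  (Set.range fun w => {v | r w v}).Finite

/-- Compatibility with concatenation. -/
def ConcatCongr (r : List A → List A → Prop) : Prop :=
  ∀ u₁ u₁' u₂ u₂' : List A, r u₁ u₁' → r u₂ u₂' → r (u₁ ++ u₂) (u₁' ++ u₂')

/-- The relation `r` recognizes `L`: relating the blocks of two infinite concatenations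
pointwise preserves membership in `L`. -/
def Recognizes [Inhabited A] (r : List A → List A → Prop) (L : Set (ℕ → A)) : Prop :=
  ∀ u u' : ℕ → List A, InfOftenNonempty u → InfOftenNonempty u' →
    (∀ i, r (u i) (u' i)) → (omegaConcat u ∈ L ↔ omegaConcat u' ∈ L)

/-- Nondeterministic Büchi automaton. -/
structure BuchiAutomaton (A : Type*) where
  Q : Type
  finQ : Finite Q
  init : Set Q
  step : Q → A → Set Q
  acc : Set Q

def BuchiAutomaton.Accepts (M : BuchiAutomaton A) (x : ℕ → A) : Prop :=
  ∃ ρ : ℕ → M.Q, ρ 0 ∈ M.init ∧ (∀ n, ρ (n + 1) ∈ M.step (ρ n) (x n)) ∧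
    ∀ n, ∃ m, n ≤ m ∧ ρ m ∈ M.acc

def OmegaRegular (L : Set (ℕ → A)) : Prop :=
  ∃ M : BuchiAutomaton A, ∀ x, x ∈ L ↔ M.Accepts x

/-- ω-words over `{a, b}` (with `a = true`, `b = false`) of the form `a^{k₁} b a^{k₂} b ⋯`
whose blocks of `a`'s have unbounded size. -/
def Uset : Set (ℕ → Bool) :=
  {x | (∀ n, ∃ m, n ≤ m ∧ x m = false) ∧ ∀ n, ∃ k, ∀ i < n, x (k + i) = true}

open Classical in
/-- Pigeonhole: an infinite set has an infinite monochromatic subset for any finite coloring. -/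
lemma infinite_fiber {C : Type*} [Finite C] (f : ℕ → C) {S : Set ℕ} (hS : S.Infinite) :
    ∃ e, {n ∈ S | f n = e}.Infinite := by
  haveI : Infinite ↥S := hS.to_subtype
  obtain ⟨e, he⟩ := Finite.exists_infinite_fiber (fun n : ↥S => f n)
  refine ⟨e, ?_⟩
  rw [← Set.infinite_coe_iff]
  refine Infinite.of_injective (fun p : ↥((fun n : ↥S => f n) ⁻¹' {e}) =>
    (⟨(p.1 : ℕ), p.1.2, p.2⟩ : ↥{n ∈ S | f n = e})) ?_
  intro a b hab
  simp only [Subtype.mk.injEq] at hab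
  exact Subtype.ext (Subtype.ext hab)

open Classical in
/-- Infinite Ramsey theorem for pairs. -/
lemma ramsey_pairs {C : Type*} [Finite C] (c : ℕ → ℕ → C) :
    ∃ (g : ℕ → ℕ) (e : C), StrictMono g ∧ ∀ i j, i < j → c (g i) (g j) = e := by
  -- iterated refinement
  have step : ∀ S : Set ℕ, S.Infinite →
      ∃ T : Set ℕ, T.Infinite ∧ T ⊆ S ∧ ∀ m ∈ T, sInf S < m ∧ c (sInf S) m = c (sInf S) (sInf T) := by
    intro S hS
    obtain ⟨e, he⟩ := infinite_fiber (f := fun n => c (sInf S) n) (S := S \ {n | n ≤ sInf S}) (by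
      refine hS.diff ?_
      exact Set.finite_le_nat _)
    refine ⟨{n ∈ S \ {n | n ≤ sInf S} | c (sInf S) n = e}, he, fun m hm => hm.1.1, ?_⟩
    intro m hm
    have hInfT : sInf {n ∈ S \ {n | n ≤ sInf S} | c (sInf S) n = e} ∈ _ := Nat.sInf_mem he.nonempty
    refine ⟨by simpa using (not_le.mp hm.1.2), ?_⟩
    rw [hm.2, hInfT.2]
  choose T hTinf hTsub hT using step
  -- the decreasing sequence of sets
  let Ss : ℕ → {S : Set ℕ // S.Infinite} := fun n =>
    Nat.rec ⟨Set.univ, Set.infinite_univ⟩ (fun _ p => ⟨T p.1 p.2, hTinf p.1 p.2⟩) n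
  let a : ℕ → ℕ := fun n => sInf (Ss n).1
  have hSsucc : ∀ n, (Ss (n+1)).1 = T (Ss n).1 (Ss n).2 := fun n => rfl
  have hmem : ∀ n m, n ≤ m → (Ss m).1 ⊆ (Ss n).1 := by
    intro n m hnm
    induction m with
    | zero => cases Nat.le_zero.mp hnm; exact fun _ h => h
    | succ k ih =>
      rcases Nat.lt_or_ge n (k+1) with h | h
      · exact (hTsub _ _).trans (ih (Nat.lt_succ_iff.mp h))
      · cases Nat.le_antisymm hnm h; exact fun _ h => h
  have key : ∀ n m, a n < m → m ∈ (Ss (n+1)).1 → c (a n) m = c (a n) (a (n+1)) := by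
    intro n m _ hm
    have := hT (Ss n).1 (Ss n).2 m (by rw [← hSsucc]; exact hm)
    exact this.2
  have ha_mem : ∀ n, a n ∈ (Ss n).1 := fun n => Nat.sInf_mem (Ss n).2.nonempty
  have ha_lt : ∀ n m, n < m → a n < a m := by
    intro n m hnm
    have h1 : a m ∈ (Ss (n+1)).1 := hmem (n+1) m hnm (ha_mem m)
    have := hT (Ss n).1 (Ss n).2 (a m) (by rw [← hSsucc]; exact h1)
    exact this.1
  -- color of step n
  set φ : ℕ → C := fun n => c (a n) (a (n+1)) with hφ
  have keyφ : ∀ n m, n < m → c (a n) (a m) = φ n := by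
    intro n m hnm
    exact key n (a m) (ha_lt n m hnm) (hmem (n+1) m hnm (ha_mem m))
  obtain ⟨e, he⟩ := infinite_fiber φ (Set.infinite_univ (α := ℕ))
  have he' : {n | φ n = e}.Infinite := by
    refine he.mono ?_; intro n hn; exact hn.2
  refine ⟨fun k => a (Nat.nth (fun n => φ n = e) k), e, ?_, ?_⟩
  · intro i j hij
    exact ha_lt _ _ (Nat.nth_strictMono he' hij)
  · intro i j hij
    rw [keyφ _ _ (Nat.nth_strictMono he' hij)]
    exact Nat.nth_mem_of_infinite he' i
section Seg
variable {A : Type*}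

/-- The segment `x i, x (i+1), …, x (j-1)` of an ω-word. -/
def seg (x : ℕ → A) (i j : ℕ) : List A :=
  (List.range (j - i)).map (fun k => x (i + k))

@[simp] lemma seg_length (x : ℕ → A) (i j : ℕ) : (seg x i j).length = j - i := by
  simp [seg]

lemma seg_append (x : ℕ → A) {i j k : ℕ} (hij : i ≤ j) (hjk : j ≤ k) :
    seg x i j ++ seg x j k = seg x i k := by
  unfold seg
  have h : k - i = (j - i) + (k - j) := by omega
  rw [h, List.range_add, List.map_append, List.map_map]
  congr 1
  apply List.map_congr_left
  intro m hm
  simp only [Function.comp_apply]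
  congr 1
  omega

lemma seg_getElem (x : ℕ → A) (i j n : ℕ) (h : n < (seg x i j).length) :
    (seg x i j)[n] = x (i + n) := by
  simp [seg]

lemma prefixList_succ (u : ℕ → List A) (m : ℕ) :
    prefixList u (m + 1) = prefixList u m ++ u m := by
  simp [prefixList, List.range_succ]

lemma prefixList_prefix (u : ℕ → List A) {m m' : ℕ} (h : m ≤ m') :
    prefixList u m <+: prefixList u m' := by
  induction m' with
  | zero => cases Nat.le_zero.mp h; exact List.prefix_rfl
  | succ k ih =>
    rcases Nat.lt_or_ge m (k+1) with h' | h'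
    · exact (ih (Nat.lt_succ_iff.mp h')).trans (by rw [prefixList_succ]; exact List.prefix_append _ _)
    · cases Nat.le_antisymm h h'; exact List.prefix_rfl

lemma omegaConcat_eq_getD [Inhabited A] (u : ℕ → List A) (m n : ℕ)
    (h : n < (prefixList u m).length) :
    omegaConcat u n = (prefixList u m).getD n default := by
  have hex : ∃ m, n < (prefixList u m).length := ⟨m, h⟩
  rw [omegaConcat, dif_pos hex]
  have hfind := Nat.find_spec hex
  rcases le_total (Nat.find hex) m with hle | hle
  · have hp := prefixList_prefix u hle
    rw [List.getD_eq_getElem _ _ hfind, List.getD_eq_getElem _ _ h, hp.getElem hfind]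
  · have hp := prefixList_prefix u hle
    rw [List.getD_eq_getElem _ _ hfind, List.getD_eq_getElem _ _ h, hp.getElem h]

/-- Blocks of `x` determined by cut points `t 0 < t 1 < ⋯` (first block `x[0..t 0)`). -/
def blocks (x : ℕ → A) (t : ℕ → ℕ) : ℕ → List A := fun k =>
  match k with
  | 0 => seg x 0 (t 0)
  | k + 1 => seg x (t k) (t (k + 1))

lemma prefixList_blocks (x : ℕ → A) (t : ℕ → ℕ) (ht : Monotone t) (m : ℕ) :
    prefixList (blocks x t) (m + 1) = seg x 0 (t m) := by
  induction m with
  | zero => rw [show (1:ℕ) = 0 + 1 from rfl, prefixList_succ]; simp [prefixList]; rfl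
  | succ k ih =>
    rw [prefixList_succ, ih]
    exact seg_append x (Nat.zero_le _) (ht (Nat.le_succ k))

lemma omegaConcat_blocks [Inhabited A] (x : ℕ → A) (t : ℕ → ℕ) (ht : StrictMono t) :
    omegaConcat (blocks x t) = x := by
  funext n
  have hlen : n < (prefixList (blocks x t) (n + 2)).length := by
    rw [prefixList_blocks x t ht.monotone, seg_length]
    have : n + 1 ≤ t (n + 1) := ht.le_apply
    omega
  have e1 := prefixList_blocks x t ht.monotone (n+1)
  rw [omegaConcat_eq_getD _ _ _ hlen, e1]
  have h' : n < (seg x 0 (t (n+1))).length := by rw [← e1]; exact hlen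
  rw [List.getD_eq_getElem _ _ h', seg_getElem x 0 _ n h']
  simp

lemma infOftenNonempty_blocks (x : ℕ → A) (t : ℕ → ℕ) (ht : StrictMono t) :
    InfOftenNonempty (blocks x t) := by
  intro n
  refine ⟨n + 1, Nat.le_succ n, ?_⟩
  show seg x (t n) (t (n+1)) ≠ []
  have : t n < t (n + 1) := ht (Nat.lt_succ_self n)
  intro hcon
  have := congrArg List.length hcon
  rw [seg_length] at this
  simp at this
  omega

end Seg
section SegExtra
variable {A : Type*}

@[simp] lemma seg_self (x : ℕ → A) (i : ℕ) : seg x i i = [] := by simp [seg]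

lemma seg_single (x : ℕ → A) (n : ℕ) : seg x n (n+1) = [x n] := by
  show (List.range (n + 1 - n)).map _ = _
  rw [Nat.add_sub_cancel_left]
  rfl

lemma seg_snoc (x : ℕ → A) {i n : ℕ} (h : i ≤ n) :
    seg x i n ++ [x n] = seg x i (n+1) := by
  rw [← seg_single x n]
  exact seg_append x h (Nat.le_succ n)

end SegExtra

section Quot
variable {A : Type*} (r : List A → List A → Prop) (hequiv : Equivalence r)

def rS : Setoid (List A) := ⟨r, hequiv⟩

def QM : Type _ := Quotient (rS r hequiv)

def cls (w : List A) : QM r hequiv := Quotient.mk (rS r hequiv) w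

lemma cls_eq {a b : List A} : cls r hequiv a = cls r hequiv b ↔ r a b :=
  ⟨fun h => Quotient.exact h, fun h => Quotient.sound h⟩

lemma finite_QM (hfin : FiniteIndex r) : Finite (QM r hequiv) := by
  haveI := hfin.to_subtype
  have hwd : ∀ a b : List A, r a b → {v | r a v} = {v | r b v} := by
    intro a b hab; ext v
    exact ⟨fun h => hequiv.trans (hequiv.symm hab) h, fun h => hequiv.trans hab h⟩
  let F : QM r hequiv → Set (List A) := Quotient.lift (fun w => {v | r w v}) hwd
  have hmem : ∀ q, F q ∈ Set.range fun w => {v | r w v} := by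
    intro q; induction q using Quotient.ind with | _ w => exact ⟨w, rfl⟩
  refine Finite.of_injective (fun q => (⟨F q, hmem q⟩ : ↥(Set.range fun w => {v | r w v}))) ?_
  intro a b hab
  induction a using Quotient.ind with | _ wa =>
  induction b using Quotient.ind with | _ wb =>
  apply Quotient.sound
  have h1 : F (Quotient.mk _ wa) = F (Quotient.mk _ wb) := congrArg Subtype.val hab
  have h2 : {v | r wa v} = {v | r wb v} := h1
  have hb : wb ∈ {v | r wa v} := h2.symm ▸ (hequiv.refl wb : wb ∈ {v | r wb v})
  exact hb

variable (hcong : ConcatCongr r)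

def qmul : QM r hequiv → QM r hequiv → QM r hequiv :=
  Quotient.map₂ (· ++ ·) (fun a a' ha b b' hb => hcong a a' b b' ha hb)

lemma cls_append (a b : List A) :
    cls r hequiv (a ++ b) = qmul r hequiv hcong (cls r hequiv a) (cls r hequiv b) := rfl

def one : QM r hequiv := cls r hequiv []

def la (a : A) : QM r hequiv := cls r hequiv [a]

lemma qmul_one_la (a : A) :
    qmul r hequiv hcong (one r hequiv) (la r hequiv a) = cls r hequiv [a] := rfl

end Quot

section Aut
variable {A : Type*} (r : List A → List A → Prop) (hequiv : Equivalence r)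
  (hcong : ConcatCongr r)

def Qaut : Type _ :=
  (QM r hequiv × QM r hequiv) × (QM r hequiv ⊕ QM r hequiv × Bool)

lemma finite_Qaut (hfin : FiniteIndex r) : Finite (Qaut r hequiv) := by
  haveI := finite_QM r hequiv hfin
  unfold Qaut
  infer_instance

def step2 (e m : QM r hequiv) (a : A) : Set (QM r hequiv × Bool) :=
  {p | p = (qmul r hequiv hcong m (la r hequiv a), false) ∨
       (qmul r hequiv hcong m (la r hequiv a) = e ∧ p = (one r hequiv, true))}

def stepA : Qaut r hequiv → A → Set (Qaut r hequiv)
  | ((u, e), Sum.inl m), a =>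
      {q' | q' = ((u, e), Sum.inl (qmul r hequiv hcong m (la r hequiv a))) ∨
        (m = u ∧ ∃ p ∈ step2 r hequiv hcong e (one r hequiv) a, q' = ((u, e), Sum.inr p))}
  | ((u, e), Sum.inr (m, _)), a =>
      {q' | ∃ p ∈ step2 r hequiv hcong e m a, q' = ((u, e), Sum.inr p)}

variable [Inhabited A] (L : Set (ℕ → A))

def rep (w y : List A) : ℕ → List A := fun i => if i = 0 then w else y

def Pset (u e : QM r hequiv) : Prop :=
  ∃ w y : List A, cls r hequiv w = u ∧ cls r hequiv y = e ∧ y ≠ [] ∧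
    omegaConcat (rep w y) ∈ L

def FactOK (u e : QM r hequiv) (x : ℕ → A) : Prop :=
  ∃ t : ℕ → ℕ, StrictMono t ∧ cls r hequiv (seg x 0 (t 0)) = u ∧
    ∀ k, cls r hequiv (seg x (t k) (t (k+1))) = e

def initA : Set (Qaut r hequiv) :=
  {q | ∃ u e, Pset r hequiv L u e ∧ q = ((u, e), Sum.inl (one r hequiv))}

def accA : Set (Qaut r hequiv) :=
  {q | ∃ p m, q = (p, Sum.inr (m, true))}

end Aut

section Transport
variable {A : Type*}

/-- Acceptance for automaton data over an arbitrary (possibly large) state type. -/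
def Accepts' {S : Type*} (init : Set S) (step : S → A → Set S) (acc : Set S)
    (x : ℕ → A) : Prop :=
  ∃ ρ : ℕ → S, ρ 0 ∈ init ∧ (∀ n, ρ (n + 1) ∈ step (ρ n) (x n)) ∧
    ∀ n, ∃ m, n ≤ m ∧ ρ m ∈ acc

lemma omegaRegular_of_accepts' {S : Type*} [Finite S] (init : Set S)
    (step : S → A → Set S) (acc : Set S) (L : Set (ℕ → A))
    (h : ∀ x, x ∈ L ↔ Accepts' init step acc x) : OmegaRegular L := by
  obtain ⟨n, ⟨φ⟩⟩ := Finite.exists_equiv_fin S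
  refine ⟨⟨Fin n, inferInstance, φ '' init, fun q a => φ '' step (φ.symm q) a, φ '' acc⟩,
    fun x => (h x).trans ⟨?_, ?_⟩⟩
  · rintro ⟨ρ, h0, hs, ha⟩
    refine ⟨fun k => φ (ρ k), ⟨ρ 0, h0, rfl⟩, fun k => ⟨ρ (k+1), by simpa using hs k, rfl⟩, ?_⟩
    intro k; obtain ⟨m, hm, hacc⟩ := ha k; exact ⟨m, hm, ρ m, hacc, rfl⟩
  · rintro ⟨ρ, h0, hs, ha⟩
    refine ⟨fun k => φ.symm (ρ k), ?_, ?_, ?_⟩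
    · obtain ⟨q, hq, hq'⟩ := h0
      show φ.symm (ρ 0) ∈ init
      rw [← hq', Equiv.symm_apply_apply]; exact hq
    · intro k
      obtain ⟨q, hq, hq'⟩ := hs k
      show φ.symm (ρ (k+1)) ∈ step (φ.symm (ρ k)) (x k)
      rw [← hq', Equiv.symm_apply_apply]; exact hq
    · intro k
      obtain ⟨m, hm, q, hq, hq'⟩ := ha k
      refine ⟨m, hm, ?_⟩
      show φ.symm (ρ m) ∈ acc
      rw [← hq', Equiv.symm_apply_apply]; exact hq

end Transport
section Sem
variable {A : Type*} [Inhabited A] (r : List A → List A → Prop) (hequiv : Equivalence r)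
  (hcong : ConcatCongr r) (L : Set (ℕ → A))

lemma infOftenNonempty_rep (w y : List A) (hy : y ≠ []) : InfOftenNonempty (rep w y) := by
  intro n
  refine ⟨n + 1, Nat.le_succ n, ?_⟩
  simp [rep]
  exact hy

lemma blocks_rel_rep (x : ℕ → A) (t : ℕ → ℕ) {u e : QM r hequiv} {w y : List A}
    (hw : cls r hequiv w = u) (hy : cls r hequiv y = e)
    (hu : cls r hequiv (seg x 0 (t 0)) = u)
    (he : ∀ k, cls r hequiv (seg x (t k) (t (k+1))) = e) :
    ∀ i, r (blocks x t i) (rep w y i) := by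
  intro i
  cases i with
  | zero =>
    have : cls r hequiv (seg x 0 (t 0)) = cls r hequiv w := by rw [hu, hw]
    exact (cls_eq r hequiv).mp this
  | succ k =>
    have : cls r hequiv (seg x (t k) (t (k+1))) = cls r hequiv y := by rw [he k, hy]
    simpa [rep, blocks] using (cls_eq r hequiv).mp this

lemma mem_iff_fact (hfin : FiniteIndex r) (hrec : Recognizes r L) (x : ℕ → A) :
    x ∈ L ↔ ∃ u e, Pset r hequiv L u e ∧ FactOK r hequiv u e x := by
  constructor
  · intro hx
    haveI := finite_QM r hequiv hfin
    obtain ⟨g, e, hg, hge⟩ := ramsey_pairs (fun i j => cls r hequiv (seg x i j))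
    have hglt : g 0 < g 1 := hg (Nat.lt_succ_self 0)
    have hy : seg x (g 0) (g 1) ≠ [] := by
      intro hcon
      have hlen := congrArg List.length hcon
      rw [seg_length] at hlen
      simp only [List.length_nil] at hlen
      omega
    have hrel : ∀ i, r (blocks x g i) (rep (seg x 0 (g 0)) (seg x (g 0) (g 1)) i) :=
      blocks_rel_rep r hequiv x g rfl (hge 0 1 Nat.one_pos) rfl
        (fun k => hge k (k+1) (Nat.lt_succ_self k))
    have hiff := hrec (blocks x g) (rep (seg x 0 (g 0)) (seg x (g 0) (g 1))) (infOftenNonempty_blocks x g hg)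
      (infOftenNonempty_rep (seg x 0 (g 0)) (seg x (g 0) (g 1)) hy) hrel
    rw [omegaConcat_blocks x g hg] at hiff
    refine ⟨cls r hequiv (seg x 0 (g 0)), cls r hequiv (seg x (g 0) (g 1)), ⟨_, _, rfl, rfl, hy, hiff.mp hx⟩,
      g, hg, rfl, ?_⟩
    intro k
    rw [hge k (k+1) (Nat.lt_succ_self k), ← hge 0 1 Nat.one_pos]
  · rintro ⟨u, e, ⟨w, y, hw, hy, hyne, hwyL⟩, t, ht, hu, he⟩
    have hrel : ∀ i, r (blocks x t i) (rep w y i) :=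
      blocks_rel_rep r hequiv x t hw hy hu he
    have hiff := hrec (blocks x t) (rep w y) (infOftenNonempty_blocks x t ht)
      (infOftenNonempty_rep w y hyne) hrel
    rw [omegaConcat_blocks x t ht] at hiff
    exact hiff.mpr hwyL

end Sem
section Aut1
variable {A : Type*} [Inhabited A] (r : List A → List A → Prop) (hequiv : Equivalence r)
  (hcong : ConcatCongr r) (L : Set (ℕ → A))

lemma stepA_inl (u e m : QM r hequiv) (a : A) :
    stepA r hequiv hcong ((u, e), Sum.inl m) a =
    {q' | q' = ((u, e), Sum.inl (qmul r hequiv hcong m (la r hequiv a))) ∨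
      (m = u ∧ ∃ p ∈ step2 r hequiv hcong e (one r hequiv) a, q' = ((u, e), Sum.inr p))} := rfl

lemma stepA_inr (u e m : QM r hequiv) (b : Bool) (a : A) :
    stepA r hequiv hcong ((u, e), Sum.inr (m, b)) a =
    {q' | ∃ p ∈ step2 r hequiv hcong e m a, q' = ((u, e), Sum.inr p)} := rfl

lemma accepts_of_fact {x : ℕ → A} {u e : QM r hequiv}
    (hP : Pset r hequiv L u e) (hF : FactOK r hequiv u e x) :
    Accepts' (initA r hequiv L) (stepA r hequiv hcong) (accA r hequiv) x := by
  classical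
  obtain ⟨t, ht, hu, he⟩ := hF
  have hGex : ∀ n : ℕ, ∃ k, n < t (k + 1) := by
    intro n
    exact ⟨n, lt_of_lt_of_le (Nat.lt_succ_self n) ht.le_apply⟩
  set G : ℕ → ℕ := fun n => Nat.find (hGex n) with hGdef
  have hGspec : ∀ n, n < t (G n + 1) := fun n => Nat.find_spec (hGex n)
  have hGuniq : ∀ n k, t k ≤ n → n < t (k + 1) → G n = k := by
    intro n k h1 h2
    rcases lt_trichotomy (G n) k with h | h | h
    · exfalso
      have h3 : t (G n + 1) ≤ t k := ht.monotone (by omega)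
      have h4 := hGspec n
      omega
    · exact h
    · exact absurd h2 (Nat.find_min (hGex n) h)
  have hGle : ∀ n, t 0 < n → t (G n) ≤ n := by
    intro n hn
    by_cases h0 : G n = 0
    · rw [h0]; exact hn.le
    · have h1 := Nat.find_min (hGex n) (show G n - 1 < G n by omega)
      push_neg at h1
      have h2 : G n - 1 + 1 = G n := by omega
      rwa [h2] at h1
  set ρ : ℕ → Qaut r hequiv := fun n =>
    if n ≤ t 0 then ((u, e), Sum.inl (cls r hequiv (seg x 0 n)))
    else ((u, e), Sum.inr (cls r hequiv (seg x (t (G n)) n), decide (t (G n) = n)))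
    with hρ
  have hρ1 : ∀ n, n ≤ t 0 → ρ n = ((u, e), Sum.inl (cls r hequiv (seg x 0 n))) := by
    intro n hn; simp only [hρ]; exact if_pos hn
  have hρ2 : ∀ n, t 0 < n →
      ρ n = ((u, e), Sum.inr (cls r hequiv (seg x (t (G n)) n), decide (t (G n) = n))) := by
    intro n hn; simp only [hρ]; exact if_neg (by omega)
  refine ⟨ρ, ?_, ?_, ?_⟩
  · rw [hρ1 0 (Nat.zero_le _)]
    exact ⟨u, e, hP, by rw [seg_self]; rfl⟩
  · intro n
    rcases Nat.lt_trichotomy n (t 0) with hn | hn | hn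
    · -- phase 1 to phase 1
      rw [hρ1 n hn.le, hρ1 (n+1) hn, stepA_inl]
      exact Or.inl (by rw [← seg_snoc x (Nat.zero_le n)]; rfl)
    · -- switch at n = t 0
      rw [hρ1 n hn.le, hρ2 (n+1) (by omega), stepA_inl]
      refine Or.inr ⟨by rw [hn]; exact hu, ?_⟩
      by_cases hc : t 1 = n + 1
      · have hG1 : G (n+1) = 1 := by
          refine hGuniq (n+1) 1 (le_of_eq hc) ?_
          have : t 1 < t (1+1) := ht (by omega)
          omega
        refine ⟨(one r hequiv, true), Or.inr ⟨?_, rfl⟩, ?_⟩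
        · rw [qmul_one_la, ← seg_single x n]
          have h0 := he 0
          rw [← hn, hc] at h0
          exact h0
        · rw [hG1, hc, seg_self]
          simp [one]
      · have hgt : n + 1 < t 1 := by
          have : t 0 < t 1 := ht Nat.zero_lt_one
          omega
        have hG1 : G (n+1) = 0 := hGuniq (n+1) 0 (by omega) hgt
        refine ⟨(qmul r hequiv hcong (one r hequiv) (la r hequiv (x n)), false), Or.inl rfl, ?_⟩
        rw [hG1, ← hn, seg_single x n, qmul_one_la]
        simp
    · -- phase 2 to phase 2
      rw [hρ2 n hn, hρ2 (n+1) (by omega), stepA_inr]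
      set j := G (n+1) with hjdef
      have hj1 : t j ≤ n + 1 := hGle (n+1) (by omega)
      have hj2 : n + 1 < t (j + 1) := hGspec (n+1)
      by_cases hc : t j = n + 1
      · have hjpos : j ≠ 0 := by
          intro h0; rw [h0] at hc; omega
        have hlt : t (j - 1) < t j := ht (by omega)
        have hGn : G n = j - 1 := by
          refine hGuniq n (j-1) (by omega) ?_
          rw [show j - 1 + 1 = j by omega]
          omega
        refine ⟨(one r hequiv, true), Or.inr ⟨?_, rfl⟩, ?_⟩
        · rw [hGn]
          have hle : t (j - 1) ≤ n := by omega
          have h1 : qmul r hequiv hcong (cls r hequiv (seg x (t (j - 1)) n))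
              (la r hequiv (x n)) = cls r hequiv (seg x (t (j - 1)) (n+1)) := by
            rw [← seg_snoc x hle]; rfl
          rw [h1, ← hc]
          have h2 := he (j - 1)
          rwa [show j - 1 + 1 = G (n+1) by omega] at h2
        · rw [hc, seg_self]
          simp [one]
      · have hle : t j ≤ n := by omega
        have hGn : G n = j := hGuniq n j hle (by omega)
        refine ⟨(qmul r hequiv hcong (cls r hequiv (seg x (t j) n))
          (la r hequiv (x n)), false), Or.inl (by rw [hGn]), ?_⟩
        have hd : decide (t j = n + 1) = false := decide_eq_false hc
        rw [hd, ← seg_snoc x hle]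
        rfl
  · -- acceptance
    intro n
    refine ⟨t (n+1), ?_, ?_⟩
    · have : n + 1 ≤ t (n+1) := ht.le_apply
      omega
    · have h0 : t 0 < t (n+1) := ht (Nat.succ_pos n)
      rw [hρ2 _ h0]
      have hGt : G (t (n+1)) = n + 1 := hGuniq _ _ le_rfl (ht (Nat.lt_succ_self (n+1)))
      refine ⟨(u, e), cls r hequiv (seg x (t (G (t (n+1)))) (t (n+1))), ?_⟩
      rw [hGt]
      simp
      rfl

end Aut1
section Aut2
variable {A : Type*} [Inhabited A] (r : List A → List A → Prop) (hequiv : Equivalence r)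
  (hcong : ConcatCongr r) (L : Set (ℕ → A))

lemma stepA_fst {q q' : Qaut r hequiv} {a : A} (h : q' ∈ stepA r hequiv hcong q a) :
    q'.1 = q.1 := by
  rcases q with ⟨⟨u', e'⟩, m | ⟨m, b⟩⟩
  · rw [stepA_inl] at h
    rcases h with h | ⟨_, p, _, h⟩ <;> rw [h]
  · rw [stepA_inr] at h
    obtain ⟨p, _, h⟩ := h
    rw [h]

lemma stepA_inr_of_inr {q q' : Qaut r hequiv} {a : A} (h : q' ∈ stepA r hequiv hcong q a)
    {p : QM r hequiv × Bool} (hp : q.2 = Sum.inr p) : ∃ p', q'.2 = Sum.inr p' := by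
  rcases q with ⟨⟨u', e'⟩, m | ⟨m, b⟩⟩
  · simp at hp
  · rw [stepA_inr] at h
    obtain ⟨p', _, h⟩ := h
    exact ⟨p', by rw [h]⟩

lemma fact_of_accepts {x : ℕ → A}
    (hacc : Accepts' (initA r hequiv L) (stepA r hequiv hcong) (accA r hequiv) x) :
    ∃ u e, Pset r hequiv L u e ∧ FactOK r hequiv u e x := by
  classical
  obtain ⟨ρ, hinit, hstep, hinf⟩ := hacc
  obtain ⟨u, e, hP, hρ0⟩ := hinit
  refine ⟨u, e, hP, ?_⟩
  -- pair component is invariant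
  have hpair : ∀ n, (ρ n).1 = (u, e) := by
    intro n
    induction n with
    | zero => rw [hρ0]
    | succ k ih => rw [stepA_fst r hequiv hcong (hstep k)]; exact ih
  -- flags
  set FlagT : ℕ → Prop := fun n => ∃ m, (ρ n).2 = Sum.inr (m, true) with hFlagT
  have hFTinf : ∀ n, ∃ m, n ≤ m ∧ FlagT m := by
    intro n
    obtain ⟨m, hm, p, m', hpm⟩ := hinf n
    exact ⟨m, hm, m', by rw [hpm]⟩
  -- the set of inr times
  have hNex : ∃ n, ∃ p, (ρ n).2 = Sum.inr p := by
    obtain ⟨m, _, m', hm⟩ := hFTinf 0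
    exact ⟨m, (m', true), hm⟩
  set n₀ : ℕ := Nat.find hNex with hn₀def
  have hn₀spec : ∃ p, (ρ n₀).2 = Sum.inr p := Nat.find_spec hNex
  have hn₀min : ∀ m, m < n₀ → ∀ p, (ρ m).2 ≠ Sum.inr p := by
    intro m hm p hp
    exact Nat.find_min hNex hm ⟨p, hp⟩
  have hn₀pos : 0 < n₀ := by
    rcases Nat.eq_zero_or_pos n₀ with h | h
    · exfalso
      obtain ⟨p, hp⟩ := hn₀spec
      rw [h, hρ0] at hp
      simp at hp
    · exact h
  -- FlagT times are ≥ n₀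
  have hFTge : ∀ n, FlagT n → n₀ ≤ n := by
    intro n hn
    by_contra hcon
    obtain ⟨m, hm⟩ := hn
    exact hn₀min n (by omega) _ hm
  obtain ⟨T0, hT0⟩ : ∃ T0, n₀ = T0 + 1 := ⟨n₀ - 1, by omega⟩
  -- phase-1 invariant
  have hphase1 : ∀ n, n ≤ T0 → ρ n = ((u, e), Sum.inl (cls r hequiv (seg x 0 n))) := by
    intro n
    induction n with
    | zero => intro _; rw [hρ0, seg_self]; rfl
    | succ k ih =>
      intro hk
      have hmem := hstep k
      rw [ih (by omega)] at hmem
      rw [stepA_inl] at hmem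
      rcases hmem with h | ⟨_, p, _, h⟩
      · rw [h, ← seg_snoc x (Nat.zero_le k)]; rfl
      · exfalso
        exact hn₀min (k+1) (by omega) p (by rw [h])
  -- the switch step
  have hseg1 : seg x T0 n₀ = [x T0] := by rw [hT0]; exact seg_single x T0
  have hswitch : cls r hequiv (seg x 0 T0) = u ∧
      ((ρ n₀ = ((u, e), Sum.inr (cls r hequiv (seg x T0 n₀), false))) ∨
       (cls r hequiv (seg x T0 n₀) = e ∧ ρ n₀ = ((u, e), Sum.inr (one r hequiv, true)))) := by
    have hmem := hstep T0
    rw [hphase1 T0 le_rfl, ← hT0, stepA_inl] at hmem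
    rcases hmem with h | ⟨hmu, p, hp, h⟩
    · exfalso
      obtain ⟨p, hp⟩ := hn₀spec
      rw [h] at hp
      simp at hp
    · refine ⟨hmu, ?_⟩
      rcases hp with hp | ⟨hqe, hp⟩
      · left
        rw [h, hp, hseg1, qmul_one_la]
      · right
        refine ⟨?_, by rw [h, hp]⟩
        rw [hseg1, ← qmul_one_la r hequiv hcong]
        exact hqe
  -- trackers that are not reset
  have hLOCAL : ∀ (n₁ s : ℕ) (b : Bool), n₀ ≤ n₁ → s ≤ n₁ →
      ρ n₁ = ((u, e), Sum.inr (cls r hequiv (seg x s n₁), b)) →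
      ∀ d, (∀ i, n₁ < i → i ≤ n₁ + d → ¬ FlagT i) →
      ∃ b', ρ (n₁ + d) = ((u, e), Sum.inr (cls r hequiv (seg x s (n₁ + d)), b')) := by
    intro n₁ s b hn₁ hs hρn₁ d
    induction d with
    | zero => intro _; exact ⟨b, hρn₁⟩
    | succ k ih =>
      intro hnoflag
      obtain ⟨b', hb'⟩ := ih (fun i h1 h2 => hnoflag i h1 (by omega))
      have hmem := hstep (n₁ + k)
      rw [hb', stepA_inr] at hmem
      obtain ⟨p, hp, h⟩ := hmem
      rcases hp with hp | ⟨hqe, hp⟩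
      · refine ⟨false, ?_⟩
        rw [show n₁ + (k+1) = n₁ + k + 1 by omega, h, hp, ← seg_snoc x (by omega : s ≤ n₁ + k)]
        rfl
      · exfalso
        refine hnoflag (n₁ + k + 1) (by omega) (by omega) ?_
        exact ⟨one r hequiv, by rw [h, hp]⟩
  -- step into a reset
  have hNEXT : ∀ (n₁ s : ℕ) (b : Bool), n₀ ≤ n₁ → s ≤ n₁ →
      ρ n₁ = ((u, e), Sum.inr (cls r hequiv (seg x s n₁), b)) →
      ∀ n₂, n₁ < n₂ → FlagT n₂ → (∀ i, n₁ < i → i < n₂ → ¬ FlagT i) →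
      cls r hequiv (seg x s n₂) = e ∧
        ρ n₂ = ((u, e), Sum.inr (one r hequiv, true)) := by
    intro n₁ s b hn₁ hs hρn₁ n₂ hlt hflag hnoflag
    obtain ⟨b', hb'⟩ := hLOCAL n₁ s b hn₁ hs hρn₁ (n₂ - 1 - n₁)
      (fun i h1 h2 => hnoflag i h1 (by omega))
    rw [show n₁ + (n₂ - 1 - n₁) = n₂ - 1 by omega] at hb'
    have hmem := hstep (n₂ - 1)
    rw [hb', show n₂ - 1 + 1 = n₂ by omega, stepA_inr] at hmem
    obtain ⟨p, hp, h⟩ := hmem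
    obtain ⟨mf, hmf⟩ := hflag
    rcases hp with hp | ⟨hqe, hp⟩
    · exfalso
      rw [h, hp] at hmf
      simp at hmf
    · constructor
      · rw [← hqe]
        conv_lhs => rw [show n₂ = n₂ - 1 + 1 by omega]
        rw [← seg_snoc x (show s ≤ n₂ - 1 by omega)]
        rfl
      · rw [h, hp]
  -- flag-true states are reset states
  have hFTstate : ∀ n, FlagT n → ρ n = ((u, e), Sum.inr (one r hequiv, true)) := by
    intro n hn
    have hge := hFTge n hn
    have hn1 : n - 1 + 1 = n := by omega
    obtain ⟨mf, hmf⟩ := hn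
    have hmem := hstep (n - 1)
    rw [hn1] at hmem
    have hp1 := hpair (n - 1)
    rcases hq : ρ (n - 1) with ⟨ue', m | ⟨m, b⟩⟩ <;> rw [hq] at hmem hp1 <;>
      simp only at hp1 <;> rw [hp1] at hmem
    · rw [stepA_inl] at hmem
      rcases hmem with h | ⟨_, p, hp, h⟩
      · exfalso; rw [h] at hmf; simp at hmf
      · rcases hp with hp | ⟨_, hp⟩
        · exfalso; rw [h, hp] at hmf; simp at hmf
        · rw [h, hp]
    · rw [stepA_inr] at hmem
      obtain ⟨p, hp, h⟩ := hmem
      rcases hp with hp | ⟨_, hp⟩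
      · exfalso; rw [h, hp] at hmf; simp at hmf
      · rw [h, hp]
  -- build the cut sequence
  have hFTex : ∀ n : ℕ, ∃ m, n < m ∧ FlagT m := by
    intro n
    obtain ⟨m, hm, hflag⟩ := hFTinf (n + 1)
    exact ⟨m, by omega, hflag⟩
  obtain ⟨t, ht0, htS⟩ : ∃ t : ℕ → ℕ, t 0 = T0 ∧ ∀ k, t (k+1) = Nat.find (hFTex (t k)) :=
    ⟨fun k => Nat.rec T0 (fun _ prev => Nat.find (hFTex prev)) k, rfl, fun k => rfl⟩
  have htlt : ∀ k, t k < t (k + 1) := by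
    intro k; rw [htS k]; exact (Nat.find_spec (hFTex (t k))).1
  have htFT : ∀ k, FlagT (t (k + 1)) := by
    intro k; rw [htS k]; exact (Nat.find_spec (hFTex (t k))).2
  have htmin : ∀ k m, t k < m → m < t (k + 1) → ¬ FlagT m := by
    intro k m h1 h2 hflag
    rw [htS k] at h2
    exact Nat.find_min (hFTex (t k)) h2 ⟨h1, hflag⟩
  have htmono : StrictMono t := strictMono_nat_of_lt_succ htlt
  refine ⟨t, htmono, by rw [ht0]; exact hswitch.1, ?_⟩
  intro k
  cases k with
  | succ j =>
    -- from one reset to the next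
    have hstate : ρ (t (j+1)) =
        ((u, e), Sum.inr (cls r hequiv (seg x (t (j+1)) (t (j+1))), true)) := by
      rw [seg_self]
      exact hFTstate _ (htFT j)
    have hge : n₀ ≤ t (j+1) := hFTge _ (htFT j)
    exact (hNEXT (t (j+1)) (t (j+1)) true hge le_rfl hstate (t (j+2))
      (htlt (j+1)) (htFT (j+1)) (htmin (j+1))).1
  | zero =>
    -- the first block
    rw [ht0]
    by_cases hn₀flag : FlagT n₀
    · have ht1 : t 1 = n₀ := by
        have h1 : t 1 ≤ n₀ := by
          rw [htS 0]
          exact Nat.find_le ⟨by rw [ht0]; omega, hn₀flag⟩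
        have h2 : t 0 < t 1 := htlt 0
        rw [ht0] at h2
        omega
      rw [ht1]
      rcases hswitch.2 with h | ⟨hcls, _⟩
      · exfalso
        obtain ⟨mf, hmf⟩ := hn₀flag
        rw [h] at hmf
        simp at hmf
      · exact hcls
    · have hstate : ρ n₀ = ((u, e), Sum.inr (cls r hequiv (seg x T0 n₀), false)) := by
        rcases hswitch.2 with h | ⟨_, h⟩
        · exact h
        · exfalso
          exact hn₀flag ⟨one r hequiv, by rw [h]⟩
      have hlt1 : n₀ < t 1 := by
        have h2 : t 0 < t 1 := htlt 0
        rw [ht0] at h2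
        have : t 1 ≠ n₀ := fun hc => hn₀flag (hc ▸ htFT 0)
        omega
      refine (hNEXT n₀ T0 false le_rfl (by omega) hstate (t 1) hlt1 (htFT 0) ?_).1
      intro i h1 h2
      exact htmin 0 i (by omega) h2
end Aut2
/-- A language recognized by a finite-index ω-congruence is ω-regular. -/
theorem statement2 [Inhabited A] (L : Set (ℕ → A)) (r : List A → List A → Prop)
    (hequiv : Equivalence r) (hfin : FiniteIndex r) (hcong : ConcatCongr r)
    (hrec : Recognizes r L) :
    OmegaRegular L := by
  haveI := finite_Qaut r hequiv hfin
  refine omegaRegular_of_accepts' (initA r hequiv L) (stepA r hequiv hcong)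
    (accA r hequiv) L ?_
  intro x
  rw [mem_iff_fact r hequiv L hfin hrec x]
  constructor
  · rintro ⟨u, e, hP, hF⟩
    exact accepts_of_fact r hequiv hcong L hP hF
  · exact fact_of_accepts r hequiv hcong L
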